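/- The quotient topological space obtained from the solid torus T = {(z₁, z₂) ∈ ℂ² : |z₁| = 1, |z₂| ≤ 1} (with the subspace topology from ℂ²) by identifying each point z with Θ(z) is homeomorphic to the closed unit ball in three-dimensional Euclidean space ℝ³. -/

import Mathlib

/-- The involution `Θ(z₁, z₂) = (conj z₁, conj z₂)` on `ℂ²`. -/
def Theta : ℂ × ℂ → ℂ × ℂ := fun z => (starRingEnd ℂ z.1, starRingEnd ℂ z.2)

/-- The solid torus `{(z₁, z₂) : |z₁| = 1, |z₂| ≤ 1}`. -/
def solidTorus : Set (ℂ × ℂ) := {z | ‖z.1‖ = 1 ∧ ‖z.2‖ ≤ 1}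

set_option maxHeartbeats 1000000

open Set Metric

/-- The invariant map `(z₁,z₂) ↦ (Re z₂, Re z₁ (1+|z₂|²)/2, Im z₁ Im z₂)`. -/
noncomputable def PhiMap : ℂ × ℂ → EuclideanSpace ℝ (Fin 3) := fun z =>
  (WithLp.equiv 2 (Fin 3 → ℝ)).symm
    ![z.2.re, z.1.re * (1 + z.2.re ^ 2 + z.2.im ^ 2) / 2, z.1.im * z.2.im]

/-- The target convex body. -/
def OmegaSet : Set (EuclideanSpace ℝ (Fin 3)) :=
  {p | (p 0) ^ 2 ≤ 1 ∧ (p 1) ^ 2 ≤ 1 ∧ (p 2) ^ 2 ≤ (1 - (p 0) ^ 2) * (1 - (p 1) ^ 2)}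

lemma continuous_PhiMap : Continuous PhiMap := by
  apply (PiLp.continuous_toLp 2 (fun _ : Fin 3 => ℝ)).comp
  apply continuous_pi
  intro i
  fin_cases i <;> simp <;> fun_prop

lemma mem_solidTorus_iff {z : ℂ × ℂ} :
    z ∈ solidTorus ↔ z.1.re ^ 2 + z.1.im ^ 2 = 1 ∧ z.2.re ^ 2 + z.2.im ^ 2 ≤ 1 := by
  have e1 := Complex.sq_norm z.1
  have e2 := Complex.sq_norm z.2
  rw [Complex.normSq_apply] at e1 e2
  simp only [solidTorus, Set.mem_setOf_eq]
  constructor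
  · rintro ⟨h1, h2⟩
    have n2 := norm_nonneg z.2
    constructor <;> nlinarith
  · rintro ⟨h1, h2⟩
    have n1 := norm_nonneg z.1
    have n2 := norm_nonneg z.2
    constructor <;> nlinarith

lemma phiMap_mem_Omega {z : ℂ × ℂ} (hz : z ∈ solidTorus) : PhiMap z ∈ OmegaSet := by
  obtain ⟨h1, h2⟩ := mem_solidTorus_iff.mp hz
  set u := z.1.re; set w := z.1.im; set v := z.2.re; set y := z.2.im
  have hu2 : u ^ 2 ≤ 1 := by nlinarith [sq_nonneg w]
  have hT : (1 + v ^ 2 + y ^ 2) / 2 ≤ 1 := by nlinarith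
  have hT0 : 0 ≤ (1 + v ^ 2 + y ^ 2) / 2 := by positivity
  have hTsq : ((1 + v ^ 2 + y ^ 2) / 2) ^ 2 ≤ 1 := by nlinarith
  refine ⟨?_, ?_, ?_⟩
  · show v ^ 2 ≤ 1
    nlinarith [sq_nonneg y]
  · show (u * (1 + v ^ 2 + y ^ 2) / 2) ^ 2 ≤ 1
    have : (u * (1 + v ^ 2 + y ^ 2) / 2) ^ 2 = u ^ 2 * ((1 + v ^ 2 + y ^ 2) / 2) ^ 2 := by ring
    rw [this]
    nlinarith [sq_nonneg u]
  · show (w * y) ^ 2 ≤ (1 - v ^ 2) * (1 - (u * (1 + v ^ 2 + y ^ 2) / 2) ^ 2)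
    have hw2 : w ^ 2 = 1 - u ^ 2 := by linarith
    have hA : 0 ≤ 1 - u ^ 2 := by linarith
    have hB : 0 ≤ 1 - v ^ 2 - y ^ 2 := by nlinarith
    have hC : 0 ≤ 1 - ((1 + v ^ 2 + y ^ 2) / 2) ^ 2 := by linarith
    have hv2 : (0:ℝ) ≤ 1 - v ^ 2 := by nlinarith [sq_nonneg y]
    nlinarith [mul_nonneg hA hB, mul_nonneg (mul_nonneg hv2 (sq_nonneg u)) hC]

lemma combo_aux {a b t1 t2 : ℝ} (hab : a + b = 1) :
    a*(1-t1^2) + b*(1-t2^2) + a*b*(t1-t2)^2 = 1 - (a*t1+b*t2)^2 := by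
  linear_combination (1 + a*t1^2 + b*t2^2) * hab

lemma third_coord {a b v1 x1 Y1 v2 x2 Y2 : ℝ} (ha : 0 ≤ a) (hb : 0 ≤ b) (hab : a + b = 1)
    (hp0 : v1^2 ≤ 1) (hp1 : x1^2 ≤ 1) (hp2 : Y1^2 ≤ (1 - v1^2)*(1 - x1^2))
    (hq0 : v2^2 ≤ 1) (hq1 : x2^2 ≤ 1) (hq2 : Y2^2 ≤ (1 - v2^2)*(1 - x2^2)) :
    (a*Y1 + b*Y2)^2 ≤ (1 - (a*v1 + b*v2)^2) * (1 - (a*x1 + b*x2)^2) := by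
  have hab' : 0 ≤ a * b := mul_nonneg ha hb
  set A1 := 1 - v1 ^ 2 with hA1
  set B1 := 1 - x1 ^ 2 with hB1
  set A2 := 1 - v2 ^ 2 with hA2
  set B2 := 1 - x2 ^ 2 with hB2
  have hA1n : 0 ≤ A1 := by nlinarith
  have hB1n : 0 ≤ B1 := by nlinarith
  have hA2n : 0 ≤ A2 := by nlinarith
  have hB2n : 0 ≤ B2 := by nlinarith
  set s1 := Real.sqrt (A1 * B1) with hs1
  set s2 := Real.sqrt (A2 * B2) with hs2
  have hs1sq : s1 ^ 2 = A1 * B1 := Real.sq_sqrt (mul_nonneg hA1n hB1n)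
  have hs2sq : s2 ^ 2 = A2 * B2 := Real.sq_sqrt (mul_nonneg hA2n hB2n)
  have hs1n : 0 ≤ s1 := hs1 ▸ Real.sqrt_nonneg _
  have hs2n : 0 ≤ s2 := hs2 ▸ Real.sqrt_nonneg _
  have hY1 : |Y1| ≤ s1 := by
    rw [← Real.sqrt_sq_eq_abs, hs1]
    exact Real.sqrt_le_sqrt hp2
  have hY2 : |Y2| ≤ s2 := by
    rw [← Real.sqrt_sq_eq_abs, hs2]
    exact Real.sqrt_le_sqrt hq2
  have hcross : 2 * (s1 * s2) ≤ A1 * B2 + A2 * B1 := by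
    have e1 : s1 * s2 = Real.sqrt (A1 * B2) * Real.sqrt (A2 * B1) := by
      rw [hs1, hs2, ← Real.sqrt_mul (mul_nonneg hA1n hB1n), ← Real.sqrt_mul
        (mul_nonneg hA1n hB2n)]
      congr 1
      ring
    rw [e1]
    have h1 : Real.sqrt (A1 * B2) ^ 2 = A1 * B2 := Real.sq_sqrt (mul_nonneg hA1n hB2n)
    have h2 : Real.sqrt (A2 * B1) ^ 2 = A2 * B1 := Real.sq_sqrt (mul_nonneg hA2n hB1n)
    nlinarith [sq_nonneg (Real.sqrt (A1 * B2) - Real.sqrt (A2 * B1))]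
  clear hs1 hs2
  clear_value s1 s2 A1 B1 A2 B2
  have hstep2 : (a * s1 + b * s2) ^ 2 ≤ (a * A1 + b * A2) * (a * B1 + b * B2) := by
    have k1 : a^2*s1^2 = a^2*(A1*B1) := by rw [hs1sq]
    have k2 : b^2*s2^2 = b^2*(A2*B2) := by rw [hs2sq]
    have h3 : 0 ≤ a*b*(A1*B2+A2*B1-2*(s1*s2)) := mul_nonneg hab' (by linarith)
    nlinarith [k1, k2, h3]
  have hAle : a * A1 + b * A2 ≤ 1 - (a * v1 + b * v2) ^ 2 := by
    rw [hA1, hA2]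
    clear * - ha hb hab
    have hk := combo_aux (t1 := v1) (t2 := v2) hab
    nlinarith [mul_nonneg (mul_nonneg ha hb) (sq_nonneg (v1 - v2))]
  have hBle : a * B1 + b * B2 ≤ 1 - (a * x1 + b * x2) ^ 2 := by
    rw [hB1, hB2]
    clear * - ha hb hab
    have hk := combo_aux (t1 := x1) (t2 := x2) hab
    nlinarith [mul_nonneg (mul_nonneg ha hb) (sq_nonneg (x1 - x2))]
  have hAn : 0 ≤ a * A1 + b * A2 := by positivity
  have hBn : 0 ≤ a * B1 + b * B2 := by positivity
  have habs : |a * Y1 + b * Y2| ≤ a * s1 + b * s2 := by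
    calc |a * Y1 + b * Y2| ≤ |a * Y1| + |b * Y2| := abs_add_le _ _
    _ = a * |Y1| + b * |Y2| := by rw [abs_mul, abs_mul, abs_of_nonneg ha, abs_of_nonneg hb]
    _ ≤ a * s1 + b * s2 :=
        add_le_add (mul_le_mul_of_nonneg_left hY1 ha) (mul_le_mul_of_nonneg_left hY2 hb)
  have h4 : (a * Y1 + b * Y2) ^ 2 ≤ (a * s1 + b * s2) ^ 2 := by
    rw [← sq_abs (a * Y1 + b * Y2)]
    exact pow_le_pow_left₀ (abs_nonneg _) habs 2
  calc (a * Y1 + b * Y2) ^ 2 ≤ (a * A1 + b * A2) * (a * B1 + b * B2) := le_trans h4 hstep2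
  _ ≤ (1 - (a * v1 + b * v2) ^ 2) * (1 - (a * x1 + b * x2) ^ 2) := by
      apply mul_le_mul hAle hBle hBn
      nlinarith [sq_nonneg (a * v1 + b * v2)]

lemma convex_Omega : Convex ℝ OmegaSet := by
  rintro p ⟨hp0, hp1, hp2⟩ q ⟨hq0, hq1, hq2⟩ a b ha hb hab
  set v1 := p 0; set x1 := p 1; set Y1 := p 2
  set v2 := q 0; set x2 := q 1; set Y2 := q 2
  have e0 : (a • p + b • q) 0 = a * v1 + b * v2 := rfl
  have e1 : (a • p + b • q) 1 = a * x1 + b * x2 := rfl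
  have e2 : (a • p + b • q) 2 = a * Y1 + b * Y2 := rfl
  have hab' : 0 ≤ a * b := mul_nonneg ha hb
  clear_value v1 x1 Y1 v2 x2 Y2
  refine ⟨?_, ?_, ?_⟩
  · rw [e0]
    clear e0 e1 e2; clear p q
    have hk := combo_aux (t1 := v1) (t2 := v2) hab
    nlinarith [mul_nonneg ha (sub_nonneg.mpr hp0), mul_nonneg hb (sub_nonneg.mpr hq0),
      mul_nonneg hab' (sq_nonneg (v1 - v2))]
  · rw [e1]
    clear e0 e1 e2; clear p q
    have hk := combo_aux (t1 := x1) (t2 := x2) hab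
    nlinarith [mul_nonneg ha (sub_nonneg.mpr hp1), mul_nonneg hb (sub_nonneg.mpr hq1),
      mul_nonneg hab' (sq_nonneg (x1 - x2))]
  · rw [e0, e1, e2]
    clear e0 e1 e2; clear p q
    exact third_coord ha hb hab hp0 hp1 hp2 hq0 hq1 hq2

lemma uc_unique {K u u' c c' : ℝ} (hK : 1 ≤ K) (hu : u^2 ≤ 1) (hu' : u'^2 ≤ 1)
    (hc : 0 ≤ c) (hc' : 0 ≤ c') (h1 : u*(K+c) = u'*(K+c'))
    (h2 : c*(1-u^2) = c'*(1-u'^2)) : u = u' ∧ c = c' := by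
  have main : ∀ x x' d d' : ℝ, x^2 ≤ 1 → x'^2 ≤ 1 → 0 ≤ d → 0 ≤ d' →
      x*(K+d) = x'*(K+d') → d*(1-x^2) = d'*(1-x'^2) → x < x' → False := by
    intro x x' d d' hx hx' hd hd' e1 e2 hlt
    have i1 : (x'-x)*(K+d') = x*(d-d') := by linear_combination -e1
    have i2 : (x'-x)*(K+d) = x'*(d-d') := by linear_combination -e1
    have p1 : 0 < x*(d-d') := by nlinarith
    have p2 : 0 < x'*(d-d') := by nlinarith
    rcases lt_trichotomy d' d with hdd | hdd | hdd
    · -- d' < d : x, x' > 0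
      have hx0 : 0 < x := by nlinarith
      have hx'0 : 0 < x' := by nlinarith
      have hxlt1 : x < 1 := by nlinarith
      nlinarith [mul_lt_mul_of_pos_right hdd (show (0:ℝ) < 1 - x^2 by nlinarith),
        mul_le_mul_of_nonneg_left (show 1-x'^2 ≤ 1-x^2 by nlinarith) hd']
    · rw [hdd] at e1
      have : x = x' := by
        have hpos : 0 < K + d := by linarith
        exact mul_right_cancel₀ (ne_of_gt hpos) e1
      linarith
    · -- d < d' : x, x' < 0
      have hx0 : x < 0 := by nlinarith
      have hx'0 : x' < 0 := by nlinarith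
      have hx'gt : -1 < x' := by nlinarith
      nlinarith [mul_lt_mul_of_pos_right hdd (show (0:ℝ) < 1 - x'^2 by nlinarith),
        mul_le_mul_of_nonneg_left (show 1-x^2 ≤ 1-x'^2 by nlinarith) hd]
  have huu : u = u' := by
    rcases lt_trichotomy u u' with h | h | h
    · exact absurd (main u u' c c' hu hu' hc hc' h1 h2 h) (fun f => f)
    · exact h
    · exact absurd (main u' u c' c hu' hu hc' hc h1.symm h2.symm h) (fun f => f)
  subst huu
  refine ⟨rfl, ?_⟩
  rcases eq_or_ne u 0 with h0 | h0
  · subst h0; simpa using h2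
  · have hpos : K + c = K + c' := mul_left_cancel₀ h0 h1
    linarith

lemma phiMap_theta (z : ℂ × ℂ) : PhiMap (Theta z) = PhiMap z := by
  simp only [PhiMap, Theta, Complex.conj_re, Complex.conj_im]
  ring_nf

lemma phiMap_inj {z z' : ℂ × ℂ} (hz : z ∈ solidTorus) (hz' : z' ∈ solidTorus)
    (h : PhiMap z = PhiMap z') : z' = z ∨ z' = Theta z := by
  obtain ⟨h1, h2⟩ := mem_solidTorus_iff.mp hz
  obtain ⟨h1', h2'⟩ := mem_solidTorus_iff.mp hz'
  have c0 : z.2.re = z'.2.re := congrArg (fun p : EuclideanSpace ℝ (Fin 3) => p 0) h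
  have c1 : z.1.re * (1 + z.2.re ^ 2 + z.2.im ^ 2) / 2
      = z'.1.re * (1 + z'.2.re ^ 2 + z'.2.im ^ 2) / 2 :=
    congrArg (fun p : EuclideanSpace ℝ (Fin 3) => p 1) h
  have c2 : z.1.im * z.2.im = z'.1.im * z'.2.im :=
    congrArg (fun p : EuclideanSpace ℝ (Fin 3) => p 2) h
  set u := z.1.re; set w := z.1.im; set v := z.2.re; set y := z.2.im
  set u' := z'.1.re; set w' := z'.1.im; set v' := z'.2.re; set y' := z'.2.im
  have hK : (1:ℝ) ≤ 1 + v^2 := by nlinarith [sq_nonneg v]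
  have e1 : u * ((1 + v^2) + y^2) = u' * ((1 + v^2) + y'^2) := by
    rw [c0] at c1 ⊢
    linarith [c1]
  have e2 : y^2 * (1 - u^2) = y'^2 * (1 - u'^2) := by
    have := congrArg (· ^ 2) c2
    have hw2 : w^2 = 1 - u^2 := by linarith
    have hw'2 : w'^2 = 1 - u'^2 := by linarith
    nlinarith [this]
  obtain ⟨huu, hcc⟩ := uc_unique hK (by nlinarith [sq_nonneg w]) (by nlinarith [sq_nonneg w'])
    (sq_nonneg y) (sq_nonneg y') e1 e2
  -- now decide which of the two cases
  have hw2 : w^2 = 1 - u^2 := by linarith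
  have hw'2 : w'^2 = w^2 := by rw [hw2, huu]; linarith
  by_cases hy : y' = y
  · by_cases hww : w' = w
    · left
      refine Prod.ext (Complex.ext huu.symm hww) (Complex.ext c0.symm hy)
    · -- w' = -w; then w y = w' y' = -w y forces w y = 0
      have hwneg : w' = -w := by
        have : (w' - w) * (w' + w) = 0 := by nlinarith [hw'2]
        rcases mul_eq_zero.mp this with h' | h'
        · exact absurd (by linarith) hww
        · linarith
      by_cases hw0 : w = 0
      · left
        refine Prod.ext (Complex.ext huu.symm (show w' = w by rw [hwneg, hw0]; ring)) (Complex.ext c0.symm hy)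
      · -- y = 0 from c2 : w y = w' y' = -w y
        have hy0 : y = 0 := by
          rw [hy, hwneg] at c2
          have : w * y = 0 := by linarith
          rcases mul_eq_zero.mp this with h' | h'
          · exact absurd h' hw0
          · exact h'
        right
        show z' = Theta z
        refine Prod.ext (Complex.ext ?_ ?_) (Complex.ext ?_ ?_)
        · show u' = (starRingEnd ℂ z.1).re
          rw [Complex.conj_re]; exact huu.symm
        · show w' = (starRingEnd ℂ z.1).im
          rw [Complex.conj_im]; exact hwneg
        · show v' = (starRingEnd ℂ z.2).re
          rw [Complex.conj_re]; exact c0.symm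
        · show y' = (starRingEnd ℂ z.2).im
          rw [Complex.conj_im]
          show y' = -y
          rw [hy, hy0]; ring
  · -- y' ≠ y; y'^2 = y^2 so y' = -y
    have hyneg : y' = -y := by
      have : (y' - y) * (y' + y) = 0 := by nlinarith [hcc]
      rcases mul_eq_zero.mp this with h' | h'
      · exact absurd (by linarith) hy
      · linarith
    by_cases hww : w' = -w
    · right
      refine Prod.ext (Complex.ext ?_ ?_) (Complex.ext ?_ ?_)
      · show u' = (starRingEnd ℂ z.1).re; rw [Complex.conj_re]; exact huu.symm
      · show w' = (starRingEnd ℂ z.1).im; rw [Complex.conj_im]; exact hww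
      · show v' = (starRingEnd ℂ z.2).re; rw [Complex.conj_re]; exact c0.symm
      · show y' = (starRingEnd ℂ z.2).im; rw [Complex.conj_im]; exact hyneg
    · -- w' = w; then from c2 : w y = w (-y), so w y = 0, w = 0 since y ≠ 0 (y' ≠ y, y' = -y)
      have hwp : w' = w := by
        have : (w' - w) * (w' + w) = 0 := by nlinarith [hw'2]
        rcases mul_eq_zero.mp this with h' | h'
        · linarith
        · exact absurd (by linarith) hww
      have hyne0 : y ≠ 0 := by
        intro h0; exact hy (by rw [hyneg, h0]; ring)
      have hw0 : w = 0 := by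
        rw [hwp, hyneg] at c2
        have : w * y = 0 := by linarith
        rcases mul_eq_zero.mp this with h' | h'
        · exact h'
        · exact absurd h' hyne0
      right
      refine Prod.ext (Complex.ext ?_ ?_) (Complex.ext ?_ ?_)
      · show u' = (starRingEnd ℂ z.1).re; rw [Complex.conj_re]; exact huu.symm
      · show w' = (starRingEnd ℂ z.1).im
        rw [Complex.conj_im]
        show w' = -w
        rw [hwp, hw0]; ring
      · show v' = (starRingEnd ℂ z.2).re; rw [Complex.conj_re]; exact c0.symm
      · show y' = (starRingEnd ℂ z.2).im; rw [Complex.conj_im]; exact hyneg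

lemma phiMap_surj {p : EuclideanSpace ℝ (Fin 3)} (hp : p ∈ OmegaSet) :
    ∃ z ∈ solidTorus, PhiMap z = p := by
  obtain ⟨h0, h1, h2⟩ := hp
  set v := p 0 with hv
  set X := p 1 with hX
  set Y := p 2 with hY
  have build : ∀ u w y : ℝ, u^2 + w^2 = 1 → v^2 + y^2 ≤ 1 →
      u * (1 + v^2 + y^2) / 2 = X → w * y = Y → ∃ z ∈ solidTorus, PhiMap z = p := by
    intro u w y hb1 hb2 hb3 hb4
    refine ⟨(⟨u, w⟩, ⟨v, y⟩), ?_, ?_⟩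
    · rw [mem_solidTorus_iff]
      exact ⟨hb1, hb2⟩
    · rw [WithLp.ext_iff]; funext i
      fin_cases i
      · exact hv
      · exact hb3
      · exact hb4
  clear_value v X Y
  by_cases hc1 : v^2 = 1
  · have hY0 : Y = 0 := by nlinarith [sq_nonneg Y]
    apply build X (Real.sqrt (1 - X^2)) 0
    · nlinarith [Real.sq_sqrt (show (0:ℝ) ≤ 1 - X^2 by linarith)]
    · linarith [sq_nonneg (0:ℝ)]
    · rw [hc1]; ring
    · rw [hY0]; ring
  · have hv1 : v^2 < 1 := lt_of_le_of_ne h0 hc1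
    by_cases hYz : Y = 0
    · by_cases hX2 : X^2 ≤ ((1 + v^2)/2)^2
      · set u := 2*X/(1 + v^2) with hu
        have hden : (0:ℝ) < 1 + v^2 := by positivity
        have hu2 : u^2 ≤ 1 := by
          rw [hu, div_pow, div_le_one (by positivity)]
          nlinarith
        apply build u (Real.sqrt (1 - u^2)) 0
        · nlinarith [Real.sq_sqrt (show (0:ℝ) ≤ 1 - u^2 by linarith)]
        · linarith
        · rw [hu]; field_simp; ring
        · rw [hYz]; ring
      · push_neg at hX2
        have habs : (1 + v^2)/2 < |X| := by
          nlinarith [abs_nonneg X, sq_abs X]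
        have hX1 : |X| ≤ 1 := by
          rw [← Real.sqrt_one, ← Real.sqrt_sq_eq_abs]
          exact Real.sqrt_le_sqrt (by linarith)
        set y := Real.sqrt (2*|X| - 1 - v^2) with hy
        have hy2 : y^2 = 2*|X| - 1 - v^2 := Real.sq_sqrt (by linarith)
        by_cases hXpos : 0 ≤ X
        · apply build 1 0 y
          · norm_num
          · nlinarith
          · rw [hy2, abs_of_nonneg hXpos]; ring
          · rw [hYz]; ring
        · apply build (-1) 0 y
          · norm_num
          · nlinarith
          · rw [hy2, abs_of_neg (lt_of_not_ge hXpos)]; ring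
          · rw [hYz]; ring
    · -- Y ≠ 0, use IVT
      have hY2pos : 0 < Y^2 := by positivity
      have hr : 0 < 1 - v^2 := by linarith
      have hX2 : X^2 ≤ 1 - Y^2/(1 - v^2) := by
        rw [le_sub_iff_add_le, ← le_sub_iff_add_le', div_le_iff₀ hr]
        nlinarith
      set A := Real.sqrt (1 - Y^2/(1 - v^2)) with hA
      have hAnn : 0 ≤ 1 - Y^2/(1 - v^2) := le_trans (sq_nonneg X) hX2
      have hA2 : A^2 = 1 - Y^2/(1 - v^2) := Real.sq_sqrt hAnn
      have hA0 : 0 ≤ A := Real.sqrt_nonneg _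
      have hA1 : A^2 < 1 := by
        rw [hA2]
        have : 0 < Y^2/(1 - v^2) := div_pos hY2pos hr
        linarith
      have hXA : |X| ≤ A := by
        rw [← Real.sqrt_sq_eq_abs, hA]
        exact Real.sqrt_le_sqrt hX2
      have hIcc : ∀ t ∈ Icc (-A) A, Y^2/(1 - v^2) ≤ 1 - t^2 := by
        intro t ht
        have h' : t^2 ≤ A^2 := sq_le_sq' ht.1 ht.2
        linarith [hA2]
      have hpos : ∀ t ∈ Icc (-A) A, 0 < 1 - t^2 := by
        intro t ht
        have := hIcc t ht
        have h'' : 0 < Y^2/(1 - v^2) := div_pos hY2pos hr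
        linarith
      set ψ : ℝ → ℝ := fun t => t * (1 + v^2 + Y^2/(1 - t^2)) / 2 with hψ
      have hcont : ContinuousOn ψ (Icc (-A) A) := by
        apply ContinuousOn.div_const
        apply ContinuousOn.mul continuousOn_id
        apply ContinuousOn.add continuousOn_const
        exact ContinuousOn.div continuousOn_const (by fun_prop)
          (fun t ht => ne_of_gt (hpos t ht))
      have hAA : 1 - A^2 = Y^2/(1 - v^2) := by rw [hA2]; ring
      have hfrac : Y^2 / (Y^2/(1 - v^2)) = 1 - v^2 := by
        field_simp
      have hψA : ψ A = A := by
        show A * (1 + v^2 + Y^2/(1 - A^2)) / 2 = A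
        rw [hAA, hfrac]; ring
      have hψnA : ψ (-A) = -A := by
        show (-A) * (1 + v^2 + Y^2/(1 - (-A)^2)) / 2 = -A
        rw [neg_sq, hAA, hfrac]; ring
      have hmem : X ∈ Icc (ψ (-A)) (ψ A) := by
        rw [hψA, hψnA]
        exact ⟨neg_le_of_abs_le hXA, le_of_abs_le hXA⟩
      obtain ⟨u, huI, huX⟩ := intermediate_value_Icc (by linarith : -A ≤ A) hcont hmem
      have h1u : 0 < 1 - u^2 := hpos u huI
      set w := Real.sqrt (1 - u^2) with hw
      have hw2 : w^2 = 1 - u^2 := Real.sq_sqrt h1u.le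
      have hwpos : 0 < w := Real.sqrt_pos.mpr h1u
      have hyval : (Y/w)^2 = Y^2/(1 - u^2) := by rw [div_pow, hw2]
      apply build u w (Y/w)
      · rw [hw2]; ring
      · have hkey : Y^2 ≤ (1 - v^2) * (1 - u^2) := by
          have h' := hIcc u huI
          calc Y^2 = (1 - v^2) * (Y^2/(1 - v^2)) := by field_simp
          _ ≤ (1 - v^2) * (1 - u^2) := mul_le_mul_of_nonneg_left h' hr.le
        rw [hyval]
        have : Y^2/(1 - u^2) ≤ 1 - v^2 := by
          rw [div_le_iff₀ h1u]; nlinarith [hkey]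
        linarith
      · rw [hyval]; exact huX
      · field_simp


lemma isClosed_Omega : IsClosed OmegaSet := by
  have hc : ∀ i : Fin 3, Continuous fun p : EuclideanSpace ℝ (Fin 3) => p i := by
    intro i
    exact (continuous_apply i).comp (PiLp.continuous_ofLp 2 (fun _ : Fin 3 => ℝ))
  have : OmegaSet = {p : EuclideanSpace ℝ (Fin 3) | (p 0)^2 ≤ 1} ∩
      ({p | (p 1)^2 ≤ 1} ∩ {p | (p 2)^2 ≤ (1-(p 0)^2)*(1-(p 1)^2)}) := rfl
  rw [this]
  exact (isClosed_le ((hc 0).pow 2) continuous_const).inter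
    ((isClosed_le ((hc 1).pow 2) continuous_const).inter
      (isClosed_le ((hc 2).pow 2)
        ((continuous_const.sub ((hc 0).pow 2)).mul (continuous_const.sub ((hc 1).pow 2)))))

lemma bounded_Omega : Bornology.IsBounded OmegaSet := by
  have : OmegaSet ⊆ Metric.closedBall 0 2 := by
    rintro p ⟨h0, h1, h2⟩
    rw [Metric.mem_closedBall, dist_zero_right]
    rw [EuclideanSpace.norm_eq]
    have : (∑ i, ‖p i‖ ^ 2) = ‖p 0‖^2 + ‖p 1‖^2 + ‖p 2‖^2 := by
      rw [Fin.sum_univ_three]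
    rw [this]
    have h2' : (p 2)^2 ≤ 1 := by nlinarith [sq_nonneg (p 0), sq_nonneg (p 1)]
    have : ‖p 0‖^2 + ‖p 1‖^2 + ‖p 2‖^2 ≤ 4 := by
      simp only [Real.norm_eq_abs, sq_abs]; nlinarith
    calc Real.sqrt (‖p 0‖^2 + ‖p 1‖^2 + ‖p 2‖^2) ≤ Real.sqrt 4 := Real.sqrt_le_sqrt this
    _ = 2 := by
        rw [show (4:ℝ) = 2^2 by norm_num, Real.sqrt_sq (by norm_num)]
  exact (Metric.isBounded_closedBall).subset this

lemma ball_subset_Omega : Metric.ball (0 : EuclideanSpace ℝ (Fin 3)) (1/2) ⊆ OmegaSet := by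
  intro p hp
  rw [Metric.mem_ball, dist_zero_right] at hp
  have key : ∀ i : Fin 3, (p i)^2 ≤ (1/2)^2 := by
    intro i
    have h1 : ‖p i‖ ≤ ‖p‖ := by
      have := EuclideanSpace.norm_eq p
      have hle : ‖p i‖^2 ≤ ∑ j, ‖p j‖^2 :=
        Finset.single_le_sum (f := fun j => ‖p j‖^2) (fun j _ => sq_nonneg _) (Finset.mem_univ i)
      rw [this]
      rw [show ∀ x:ℝ, x^2 = x*x from fun x => sq x] at hle
      calc ‖p i‖ = Real.sqrt (‖p i‖ * ‖p i‖) := (Real.sqrt_mul_self (norm_nonneg _)).symm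
      _ ≤ _ := Real.sqrt_le_sqrt hle
    have : ‖p i‖ ≤ 1/2 := le_trans h1 (le_of_lt hp)
    calc (p i)^2 = ‖p i‖^2 := by rw [Real.norm_eq_abs, sq_abs]
    _ ≤ (1/2)^2 := by nlinarith [norm_nonneg (p i)]
  have k0 := key 0; have k1 := key 1; have k2 := key 2
  refine ⟨by nlinarith, by nlinarith, by nlinarith⟩

lemma isCompact_solidTorus : IsCompact solidTorus := by
  have hclosed : IsClosed solidTorus := by
    have : solidTorus = {z : ℂ × ℂ | ‖z.1‖ = 1} ∩ {z | ‖z.2‖ ≤ 1} := rfl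
    rw [this]
    exact (isClosed_eq (continuous_norm.comp continuous_fst) continuous_const).inter
      (isClosed_le (continuous_norm.comp continuous_snd) continuous_const)
  have hbdd : Bornology.IsBounded solidTorus := by
    have : solidTorus ⊆ Metric.closedBall 0 1 := by
      rintro z ⟨h1, h2⟩
      rw [Metric.mem_closedBall, dist_zero_right, Prod.norm_def]
      exact max_le (le_of_eq h1) h2
    exact Metric.isBounded_closedBall.subset this
  exact Metric.isCompact_of_isClosed_isBounded hclosed hbdd

/-- The quotient of the solid torus by the identification `z ∼ Θ z` is homeomorphic to
the closed unit ball in `ℝ³`. -/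
theorem quotient_solidTorus_theta_homeomorph_ball :
    Nonempty
      ((Quot fun x y : solidTorus => Theta (x : ℂ × ℂ) = (y : ℂ × ℂ)) ≃ₜ
        (Metric.closedBall (0 : EuclideanSpace ℝ (Fin 3)) 1)) := by
  set r : solidTorus → solidTorus → Prop :=
    fun x y => Theta (x : ℂ × ℂ) = (y : ℂ × ℂ) with hr
  -- compactness of the quotient
  haveI : CompactSpace solidTorus := isCompact_iff_compactSpace.mp isCompact_solidTorus
  haveI : CompactSpace (Quot r) := by
    constructor
    rw [← (Quot.mk_surjective).range_eq]
    exact isCompact_range continuous_quot_mk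
  -- the lifted map
  have hresp : ∀ x y : solidTorus, r x y →
      (⟨PhiMap (x : ℂ × ℂ), phiMap_mem_Omega x.2⟩ : OmegaSet) =
      ⟨PhiMap (y : ℂ × ℂ), phiMap_mem_Omega y.2⟩ := by
    intro x y hxy
    apply Subtype.ext
    show PhiMap (x : ℂ × ℂ) = PhiMap (y : ℂ × ℂ)
    rw [← hxy, phiMap_theta]
  set F : Quot r → OmegaSet :=
    Quot.lift (fun x : solidTorus =>
      (⟨PhiMap (x : ℂ × ℂ), phiMap_mem_Omega x.2⟩ : OmegaSet)) hresp with hF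
  have hFcont : Continuous F :=
    continuous_quot_lift _ ((continuous_PhiMap.comp continuous_subtype_val).subtype_mk _)
  have hFinj : Function.Injective F := by
    intro a b
    refine Quot.induction_on a (fun x => Quot.induction_on b (fun y h => ?_))
    rw [hF] at h
    have hxy : PhiMap (x : ℂ × ℂ) = PhiMap (y : ℂ × ℂ) := by exact congrArg Subtype.val h
    rcases phiMap_inj x.2 y.2 hxy with h1 | h1
    · have : y = x := Subtype.ext h1
      rw [this]
    · exact (Quot.sound (show r x y from h1.symm))
  have hFsurj : Function.Surjective F := by
    rintro ⟨p, hp⟩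
    obtain ⟨z, hz, hzp⟩ := phiMap_surj hp
    refine ⟨Quot.mk r ⟨z, hz⟩, ?_⟩
    rw [hF]
    exact Subtype.ext hzp
  let e : Quot r ≃ OmegaSet := Equiv.ofBijective F ⟨hFinj, hFsurj⟩
  have h1 : Quot r ≃ₜ OmegaSet := Continuous.homeoOfEquivCompactToT2 (f := e) hFcont
  -- Omega to closed ball via gauge rescaling
  have hΩnhds : OmegaSet ∈ nhds (0 : EuclideanSpace ℝ (Fin 3)) :=
    Filter.mem_of_superset (Metric.ball_mem_nhds 0 (by norm_num)) ball_subset_Omega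
  have hBnhds : Metric.closedBall (0 : EuclideanSpace ℝ (Fin 3)) 1 ∈ nhds 0 :=
    Metric.closedBall_mem_nhds 0 (by norm_num)
  have hΩvb : Bornology.IsVonNBounded ℝ OmegaSet :=
    NormedSpace.isVonNBounded_of_isBounded _ bounded_Omega
  have hBvb : Bornology.IsVonNBounded ℝ (Metric.closedBall (0 : EuclideanSpace ℝ (Fin 3)) 1) :=
    NormedSpace.isVonNBounded_closedBall ℝ _ 1
  set g := gaugeRescaleHomeomorph OmegaSet (Metric.closedBall 0 1) convex_Omega hΩnhds hΩvb
    (convex_closedBall 0 1) hBnhds hBvb with hg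
  have himg : g '' OmegaSet = Metric.closedBall (0 : EuclideanSpace ℝ (Fin 3)) 1 := by
    have := image_gaugeRescaleHomeomorph_closure convex_Omega hΩnhds hΩvb
      (convex_closedBall 0 1) hBnhds hBvb
    rwa [isClosed_Omega.closure_eq, Metric.isClosed_closedBall.closure_eq] at this
  have h2 : OmegaSet ≃ₜ (Metric.closedBall (0 : EuclideanSpace ℝ (Fin 3)) 1) :=
    (g.image OmegaSet).trans (Homeomorph.setCongr himg)
  exact ⟨h1.trans h2⟩
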